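/- Let X_1, …, X_n be {0,1}-valued random variables on a common probability space with p_i = P(X_i = 1), W = X_1 + ⋯ + X_n, and λ = E[W] > 0. Suppose the X_i are totally positively dependent (TPD). Then for every a ∈ [0,∞): E[W·1_{(W > a)}] ≥ Σ_{i=1}^n p_i · P(W + 1 − X_i > a). Equivalently, the W-size-biased variable W_β stochastically dominates W + 1 − X_V, where V is a random index independent of (X_1,…,X_n) with P(V = i) = p_i/λ, and W + 1 − X_V ≥ 0 almost surely. -/

import Mathlib

open MeasureTheory ProbabilityTheory

/-- Lemma 2 of Daly, Lefèvre, Utev: for totally positively dependent (TPD)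
indicators with `E[W] = λ > 0`, one has
`E[W·1_{(W > a)}] ≥ Σ_i p_i · P(W + 1 - X_i > a)` for all `a ≥ 0`,
i.e. the size-biased variable `W_β` stochastically dominates `W + 1 - X_V`. -/
theorem stmt9
    {Ω : Type*} [MeasurableSpace Ω] (P : Measure Ω) [IsProbabilityMeasure P]
    (n : ℕ) (X : Fin n → Ω → ℕ) (hXm : ∀ i, Measurable (X i))
    (hX01 : ∀ i ω, X i ω ≤ 1)
    (p : Fin n → ℝ) (hp : ∀ i, p i = (P {ω | X i ω = 1}).toReal)
    (W : Ω → ℕ) (hWdef : ∀ ω, W ω = ∑ i, X i ω)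
    (lam : ℝ) (hlam : lam = ∫ ω, (W ω : ℝ) ∂P) (hlam0 : 0 < lam)
    (hTPD : ∀ (i : Fin n) (g₁ g₂ : ℝ → ℝ), Monotone g₁ → Monotone g₂ →
      (∫ ω, g₁ (X i ω : ℝ) ∂P) * (∫ ω, g₂ ((W ω - X i ω : ℕ) : ℝ) ∂P) ≤
        ∫ ω, g₁ (X i ω : ℝ) * g₂ ((W ω - X i ω : ℕ) : ℝ) ∂P) :
    ∀ a : ℝ, 0 ≤ a →
      (∑ i, p i * (P {ω | a < ((W ω + 1 - X i ω : ℕ) : ℝ)}).toReal) ≤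
        ∫ ω, (W ω : ℝ) * (if a < (W ω : ℝ) then (1 : ℝ) else 0) ∂P := by
  intro a ha
  have hWm : Measurable W := by
    have h : W = fun ω => ∑ i, X i ω := funext hWdef
    rw [h]; exact Finset.measurable_sum _ fun i _ => hXm i
  have hXW : ∀ i ω, X i ω ≤ W ω := fun i ω => by
    rw [hWdef]
    exact Finset.single_le_sum (f := fun j => X j ω) (fun _ _ => Nat.zero_le _)
      (Finset.mem_univ i)
  set g₂ : ℝ → ℝ := fun x => if a < x + 1 then 1 else 0 with hg2
  have hg2mono : Monotone g₂ := by
    intro x y hxy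
    by_cases h : a < x + 1
    · have h' : a < y + 1 := lt_of_lt_of_le h (by linarith)
      simp [g₂, h, h']
    · simp only [g₂, if_neg h]
      split <;> norm_num
  -- the three relevant families of sets
  set S : Fin n → Set Ω := fun i => {ω | a < ((W ω + 1 - X i ω : ℕ) : ℝ)} with hS
  set T : Fin n → Set Ω := fun i => {ω | X i ω = 1 ∧ a < (W ω : ℝ)} with hT
  set A : Fin n → Set Ω := fun i => {ω | X i ω = 1} with hA
  have hAm : ∀ i, MeasurableSet (A i) := fun i => hXm i (measurableSet_singleton 1)
  have hWcast : Measurable fun ω => ((W ω : ℕ) : ℝ) :=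
    (measurable_of_countable _).comp hWm
  have hSm : ∀ i, MeasurableSet (S i) := fun i => by
    have hm : Measurable fun ω => ((W ω + 1 - X i ω : ℕ) : ℝ) :=
      (measurable_of_countable (fun q : ℕ × ℕ => ((q.1 + 1 - q.2 : ℕ) : ℝ))).comp
        ((hWm).prodMk (hXm i))
    exact measurableSet_lt measurable_const hm
  have hTm : ∀ i, MeasurableSet (T i) :=
    fun i => (hAm i).inter (measurableSet_lt measurable_const hWcast)
  -- integral of X i is p i
  have hintX : ∀ i, (∫ ω, (X i ω : ℝ) ∂P) = p i := by
    intro i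
    have h1 : (fun ω => (X i ω : ℝ)) = (A i).indicator (fun _ => (1 : ℝ)) := by
      funext ω
      by_cases h : X i ω = 1
      · simp [Set.indicator, hA, h]
      · have h0 : X i ω = 0 := by have := hX01 i ω; omega
        simp [Set.indicator, hA, h, h0]
    rw [h1, integral_indicator_const _ (hAm i), hp i, smul_eq_mul, mul_one, measureReal_def]
  -- integral of g₂ (W - X i) is P (S i)
  have hintg : ∀ i, (∫ ω, g₂ ((W ω - X i ω : ℕ) : ℝ) ∂P) = (P (S i)).toReal := by
    intro i
    have h1 : (fun ω => g₂ ((W ω - X i ω : ℕ) : ℝ)) =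
        (S i).indicator (fun _ => (1 : ℝ)) := by
      funext ω
      have hle := hXW i ω
      have hcast : ((W ω + 1 - X i ω : ℕ) : ℝ) = ((W ω - X i ω : ℕ) : ℝ) + 1 := by
        have : W ω + 1 - X i ω = (W ω - X i ω) + 1 := by omega
        rw [this]; push_cast; ring
      by_cases h : a < ((W ω - X i ω : ℕ) : ℝ) + 1
      · have hmem : ω ∈ S i := by simp only [hS, Set.mem_setOf_eq, hcast]; exact h
        simp [g₂, h, Set.indicator_of_mem hmem]
      · have hmem : ω ∉ S i := by
          simp only [hS, Set.mem_setOf_eq, hcast]; exact h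
        simp [g₂, h, Set.indicator_of_notMem hmem]
    rw [h1, integral_indicator_const _ (hSm i), smul_eq_mul, mul_one, measureReal_def]
  -- the product integrand is the indicator of T i
  have hprod : ∀ i, (fun ω => (X i ω : ℝ) * g₂ ((W ω - X i ω : ℕ) : ℝ)) =
      (T i).indicator (fun _ => (1 : ℝ)) := by
    intro i
    funext ω
    by_cases h : X i ω = 1
    · have hW1 : 1 ≤ W ω := h ▸ hXW i ω
      have hcast : ((W ω - X i ω : ℕ) : ℝ) + 1 = (W ω : ℝ) := by
        rw [h]
        have : W ω - 1 + 1 = W ω := by omega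
        rw [Nat.cast_sub hW1]; push_cast; ring
      rw [h] at hcast
      by_cases h2 : a < (W ω : ℝ)
      · have hmem : ω ∈ T i := ⟨h, h2⟩
        simp [g₂, h, hcast, h2, Set.indicator_of_mem hmem]
      · have hmem : ω ∉ T i := fun hc => h2 hc.2
        simp [g₂, h, hcast, h2, Set.indicator_of_notMem hmem]
    · have h0 : X i ω = 0 := by have := hX01 i ω; omega
      have hmem : ω ∉ T i := fun hc => h hc.1
      simp [h0, Set.indicator_of_notMem hmem]
  -- the target integrand is the sum of the indicators of T i
  have hsum : (fun ω => (W ω : ℝ) * (if a < (W ω : ℝ) then (1 : ℝ) else 0)) =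
      fun ω => ∑ i, (T i).indicator (fun _ => (1 : ℝ)) ω := by
    funext ω
    have h1 : ∀ i, (T i).indicator (fun _ => (1 : ℝ)) ω =
        (X i ω : ℝ) * (if a < (W ω : ℝ) then (1 : ℝ) else 0) := by
      intro i
      by_cases h : X i ω = 1
      · by_cases h2 : a < (W ω : ℝ)
        · have hmem : ω ∈ T i := ⟨h, h2⟩
          simp [Set.indicator_of_mem hmem, h, h2]
        · have hmem : ω ∉ T i := fun hc => h2 hc.2
          simp [Set.indicator_of_notMem hmem, h2]
      · have h0 : X i ω = 0 := by have := hX01 i ω; omega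
        have hmem : ω ∉ T i := fun hc => h hc.1
        simp [Set.indicator_of_notMem hmem, h0]
    rw [Finset.sum_congr rfl fun i _ => h1 i, ← Finset.sum_mul, ← Nat.cast_sum,
      ← hWdef]
  have hTint : ∀ i, Integrable ((T i).indicator (fun _ => (1 : ℝ))) P := by
    intro i
    exact (integrable_indicator_iff (hTm i)).2
      (integrableOn_const (measure_lt_top P _).ne)
  calc ∑ i, p i * (P (S i)).toReal
      ≤ ∑ i, ∫ ω, (X i ω : ℝ) * g₂ ((W ω - X i ω : ℕ) : ℝ) ∂P := by
        refine Finset.sum_le_sum fun i _ => ?_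
        have := hTPD i (fun x => x) g₂ monotone_id hg2mono
        simpa [hintX i, hintg i] using this
    _ = ∑ i, ∫ ω, (T i).indicator (fun _ => (1 : ℝ)) ω ∂P := by
        refine Finset.sum_congr rfl fun i _ => ?_
        rw [hprod i]
    _ = ∫ ω, ∑ i, (T i).indicator (fun _ => (1 : ℝ)) ω ∂P := by
        rw [integral_finset_sum _ fun i _ => hTint i]
    _ = ∫ ω, (W ω : ℝ) * (if a < (W ω : ℝ) then (1 : ℝ) else 0) ∂P := by
        rw [hsum]
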